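/- The bound E[|X-μ|^p] ≤ (A-a)^p κ_p((μ-a)/(A-a)) is attained: if X takes the value a with probability (A-μ)/(A-a) and the value A with probability (μ-a)/(A-a), then E[|X-μ|^p] = (A-a)^p κ_p((μ-a)/(A-a)). -/

import Mathlib

open MeasureTheory

noncomputable def kappa (p x : ℝ) : ℝ := x * (1 - x) ^ p + (1 - x) * x ^ p

/-- The central-moment bound is attained by the two-point distribution on `{a, A}`
with mean `m`. -/
theorem central_moment_kappa_bound_sharp {Ω : Type*} [MeasurableSpace Ω]
    (μ : Measure Ω) [IsProbabilityMeasure μ]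
    (a A m : ℝ) (haA : a < A) (hm : m ∈ Set.Icc a A) (p : ℝ) (hp : 1 ≤ p)
    (X : Ω → ℝ) (hXmeas : Measurable X)
    (ha : μ {ω | X ω = a} = ENNReal.ofReal ((A - m) / (A - a)))
    (hA : μ {ω | X ω = A} = ENNReal.ofReal ((m - a) / (A - a)))
    (hsupp : ∀ᵐ ω ∂μ, X ω = a ∨ X ω = A) :
    (∫ ω, |X ω - m| ^ p ∂μ) = (A - a) ^ p * kappa p ((m - a) / (A - a)) := by
  obtain ⟨hma, hmA⟩ := hm
  have hAa : (0:ℝ) < A - a := by linarith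
  have hsa : MeasurableSet {ω | X ω = a} := hXmeas (measurableSet_singleton a)
  have hsA : MeasurableSet {ω | X ω = A} := hXmeas (measurableSet_singleton A)
  have hne : a ≠ A := ne_of_lt haA
  have hae : (fun ω => |X ω - m| ^ p)
      =ᵐ[μ] (fun ω => Set.indicator {ω | X ω = a} (fun _ => (m-a)^p) ω
        + Set.indicator {ω | X ω = A} (fun _ => (A-m)^p) ω) := by
    filter_upwards [hsupp] with ω hω
    rcases hω with h | h
    · have h2 : ω ∉ {ω | X ω = A} := by simp [Set.mem_setOf_eq, h]; linarith
      have h1 : ω ∈ {ω | X ω = a} := h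
      rw [Set.indicator_of_mem h1, Set.indicator_of_notMem h2, h,
        abs_of_nonpos (by linarith : a - m ≤ 0)]
      ring_nf
    · have h2 : ω ∉ {ω | X ω = a} := by simp [Set.mem_setOf_eq, h]; linarith
      have h1 : ω ∈ {ω | X ω = A} := h
      rw [Set.indicator_of_mem h1, Set.indicator_of_notMem h2, h,
        abs_of_nonneg (by linarith : (0:ℝ) ≤ A - m)]
      ring_nf
  rw [integral_congr_ae hae, integral_add
      ((integrable_const _).indicator hsa) ((integrable_const _).indicator hsA),
    integral_indicator_const _ hsa, integral_indicator_const _ hsA, measureReal_def, measureReal_def, ha, hA,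
    ENNReal.toReal_ofReal (div_nonneg (by linarith) hAa.le),
    ENNReal.toReal_ofReal (div_nonneg (by linarith) hAa.le)]
  have h1x : 1 - (m - a)/(A - a) = (A - m)/(A - a) := by field_simp; ring
  rw [kappa, h1x, Real.div_rpow (by linarith) hAa.le, Real.div_rpow (by linarith) hAa.le]
  have hpow : (0:ℝ) < (A - a) ^ p := Real.rpow_pos_of_pos hAa p
  simp only [smul_eq_mul]
  field_simp
  ring
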